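/- (Correctness of the FTMCFE-IP scheme.) Define, for each i ∈ B, the ciphertext components C¹ᵢ = g^{hₗ·sᵢ}·g₀^{xᵢ}, C²ᵢ = (g^{hₗ}·g₁^{wᵢ})^{tᵢ}, C³ᵢ = (g₁·g₂^{γ^τ})^{wᵢ}, C⁴ᵢ = ĝ₁^{wᵢ}, C⁵ᵢ = g₂^{γ^τ·tᵢ}, and the partial functional key components SK¹ᵢ = ĝ₀^{sᵢ·yᵢ}·ĝ^{tᵢ·h_y}, SK²ᵢ = (ĝ^{h_y}·ĝ₁^{β})^{tᵢ}, SK³ᵢ = g₁^{β·tᵢ}, SK⁴ᵢ = ĝ^{h_y·wᵢ}, SK⁵ᵢ = g₂^{β̄·tᵢ}. If β̄ = γ^τ·β, then ∏_{i∈B} [ e(C¹ᵢ, ĝ₀^{yᵢ}) · e(C²ᵢ, ĝ^{h_y}) · e(SK³ᵢ, C⁴ᵢ) · e(C⁵ᵢ, SK⁴ᵢ) · e(SK⁵ᵢ, C⁴ᵢ) ] · ( ∏_{i∈B} [ e(g^{hₗ}, SK¹ᵢ) · e(C³ᵢ, SK²ᵢ) ] )⁻¹ = e(g₀, ĝ₀)^{∑_{i∈B}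 xᵢ·yᵢ}. -/
import Mathlib

lemma hom_zpow_apply {M N : Type*} [MulOneClass M] [CommGroup N] (f : M →* N) (n : ℤ) (a : M) :
    (f ^ n) a = f a ^ n := rfl

lemma zpow_sum' {GT : Type*} [CommGroup GT] (b : GT) {ι : Type*} (B : Finset ι) (f : ι → ℤ) :
    b ^ (∑ i ∈ B, f i) = ∏ i ∈ B, b ^ f i := by
  induction B using Finset.cons_induction with
  | empty => simp
  | cons a s ha ih => simp [Finset.sum_cons, Finset.prod_cons, zpow_add, ih]

set_option maxHeartbeats 1000000 in
/-- Correctness of the FTMCFE-IP scheme. -/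
theorem FTMCFE_IP_correctness {G Ghat GT : Type*} [CommGroup G] [CommGroup Ghat] [CommGroup GT]
    (e : G →* Ghat →* GT) (g g₀ g₁ g₂ : G) (ghat ghat₀ ghat₁ : Ghat)
    {ι : Type*} (B : Finset ι) (s t w x y : ι → ℤ)
    (hl hy γ β βbar : ℤ) (τ : ℕ) (hβ : βbar = γ ^ τ * β) :
    (∏ i ∈ B,
        (e (g ^ (hl * s i) * g₀ ^ (x i)) (ghat₀ ^ (y i)) *
          e ((g ^ hl * g₁ ^ (w i)) ^ (t i)) (ghat ^ hy) *
          e (g₁ ^ (β * t i)) (ghat₁ ^ (w i)) *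
          e (g₂ ^ (γ ^ τ * t i)) (ghat ^ (hy * w i)) *
          e (g₂ ^ (βbar * t i)) (ghat₁ ^ (w i)))) *
      (∏ i ∈ B,
        (e (g ^ hl) (ghat₀ ^ (s i * y i) * ghat ^ (t i * hy)) *
          e ((g₁ * g₂ ^ (γ ^ τ)) ^ (w i)) ((ghat ^ hy * ghat₁ ^ β) ^ (t i))))⁻¹ =
      e g₀ ghat₀ ^ (∑ i ∈ B, x i * y i) := by
  subst hβ
  rw [← Finset.prod_inv_distrib, ← Finset.prod_mul_distrib, zpow_sum']
  refine Finset.prod_congr rfl fun i _ => ?_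
  rw [mul_inv_eq_iff_eq_mul]
  simp only [map_mul, map_zpow, MonoidHom.mul_apply, hom_zpow_apply, mul_zpow, ← zpow_mul]
  ring_nf
  simp only [mul_comm, mul_left_comm, mul_assoc]
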